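/- The common limit of the AGM iteration started from a_0 = 1, b_0 = √(1-r²), with r ∈ (0,1), equals π/(2K(r)), where K(r) = (π/2)·F(1/2, 1/2; 1; r²) is the complete elliptic integral of the first kind. -/

import Mathlib

/-- The shifted factorial (Appell symbol) `(a)ₙ = a (a+1) ⋯ (a+n-1)`. -/
noncomputable def poch (a : ℝ) (n : ℕ) : ℝ := ∏ i ∈ Finset.range n, (a + i)

/-- The Gaussian hypergeometric function `F(a,b;c;x)` as a power series. -/
noncomputable def hypF (a b c x : ℝ) : ℝ :=
  ∑' n : ℕ, poch a n * poch b n / (poch c n * (n.factorial : ℝ)) * x ^ n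

/-- The complete elliptic integral of the first kind. -/
noncomputable def ellK (r : ℝ) : ℝ := (Real.pi / 2) * hypF (1/2) (1/2) 1 (r^2)

open MeasureTheory Real Set Filter

namespace AGMX

/-- Wallis-type coefficients `c n = ∏ (2i+1)/(2i+2)` -/
noncomputable def c (n : ℕ) : ℝ := ∏ i ∈ Finset.range n, ((2*i+1)/(2*i+2) : ℝ)

lemma c_zero : c 0 = 1 := by simp [c]

lemma c_succ (n : ℕ) : c (n+1) = c n * ((2*n+1)/(2*n+2)) := by
  rw [c, Finset.prod_range_succ]; rfl

lemma c_pos (n : ℕ) : 0 < c n := by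
  apply Finset.prod_pos; intro i _; positivity

lemma c_le_one (n : ℕ) : c n ≤ 1 := by
  apply Finset.prod_le_one
  · intro i _; positivity
  · intro i _
    rw [div_le_one (by positivity)]; linarith

lemma c_rec (n : ℕ) : (2*(n:ℝ)+2) * c (n+1) = (2*n+1) * c n := by
  rw [c_succ]; field_simp

lemma summable_c_mul_pow {x : ℝ} (hx : |x| < 1) : Summable (fun n => c n * x^n) := by
  apply Summable.of_norm
  apply Summable.of_nonneg_of_le (fun n => norm_nonneg _) (fun n => ?_)
    (summable_geometric_of_lt_one (abs_nonneg x) hx)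
  rw [norm_mul, norm_pow, Real.norm_eq_abs, Real.norm_eq_abs,
    abs_of_pos (c_pos n)]
  calc c n * |x|^n ≤ 1 * |x|^n := by
        apply mul_le_mul_of_nonneg_right (c_le_one n) (by positivity)
    _ = |x|^n := one_mul _

/-- Key binomial series: `(1-x)^{-1/2} = ∑ c n * x^n` for `0 ≤ x < 1`. -/
lemma hasSum_c_sqrt {x : ℝ} (hx0 : 0 ≤ x) (hx1 : x < 1) :
    HasSum (fun n => c n * x^n) ((Real.sqrt (1-x))⁻¹) := by
  set ρ : ℝ := (1+x)/2 with hρdef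
  have hρ0 : 0 < ρ := by positivity
  have hρ1 : ρ < 1 := by simp only [hρdef]; linarith
  have hxρ : x < ρ := by simp only [hρdef]; linarith
  set t : Set ℝ := Ioo (-ρ) ρ with ht
  have hto : IsOpen t := isOpen_Ioo
  have htc : IsPreconnected t := (convex_Ioo _ _).isPreconnected
  have hxt : x ∈ t := ⟨by linarith, hxρ⟩
  have h0t : (0:ℝ) ∈ t := ⟨by linarith, hρ0⟩
  -- summable bound for derivatives
  set u : ℕ → ℝ := fun n => n * ρ^(n-1) with hu
  have husum : Summable u := by
    have h1 : Summable (fun n : ℕ => (n:ℝ) * ρ^n) := by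
      simpa using summable_pow_mul_geometric_of_norm_lt_one 1
        (r := ρ) (by rw [Real.norm_eq_abs, abs_of_pos hρ0]; exact hρ1)
    have := h1.mul_right ρ⁻¹
    apply this.congr
    intro n
    cases n with
    | zero => simp [hu]
    | succ m => simp only [hu]; field_simp; simp; ring
  have hderiv : ∀ (n : ℕ) (y : ℝ), y ∈ t →
      HasDerivAt (fun z => c n * z^n) (c n * (n * y^(n-1))) y :=
    fun n y _ => (hasDerivAt_pow n y).const_mul (c n)
  have hbound : ∀ (n : ℕ) (y : ℝ), y ∈ t → ‖c n * (n * y^(n-1))‖ ≤ u n := by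
    intro n y hy
    have hyρ : |y| ≤ ρ := by
      rw [abs_le]; exact ⟨le_of_lt hy.1, le_of_lt hy.2⟩
    rw [norm_mul, norm_mul, Real.norm_eq_abs, Real.norm_eq_abs, Real.norm_eq_abs,
      abs_of_pos (c_pos n), Nat.abs_cast, abs_pow]
    calc c n * ((n:ℝ) * |y|^(n-1)) ≤ 1 * ((n:ℝ) * ρ^(n-1)) := by
          apply mul_le_mul (c_le_one n) _ (by positivity) zero_le_one
          exact mul_le_mul_of_nonneg_left (pow_le_pow_left₀ (abs_nonneg y) hyρ _) (Nat.cast_nonneg n)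
      _ = u n := one_mul _
  have hsum0 : Summable (fun n => c n * (0:ℝ)^n) := by
    apply summable_of_ne_finset_zero (s := {0})
    intro n hn
    simp at hn
    simp [zero_pow hn]
  set F : ℝ → ℝ := fun y => ∑' n, c n * y^n with hF
  have hFderiv : ∀ y ∈ t, HasDerivAt F (∑' n, c n * ((n:ℝ) * y^(n-1))) y := by
    intro y hy
    exact hasDerivAt_tsum_of_isPreconnected husum hto htc hderiv hbound h0t hsum0 hy
  -- the ODE: (1-y) * (2 * F' y) = F y on t
  have key : ∀ y ∈ t, (1-y) * (2 * ∑' n, c n * ((n:ℝ) * y^(n-1))) = F y := by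
    intro y hy
    have hy1 : |y| < 1 := by
      rw [abs_lt]; exact ⟨by linarith [hy.1], lt_trans hy.2 hρ1⟩
    have hDsum : Summable (fun n => c n * ((n:ℝ) * y^(n-1))) :=
      Summable.of_norm_bounded husum (fun n => hbound n y hy)
    have hSA : Summable (fun n : ℕ => (2*(n:ℝ)+1) * c n * y^n) := by
      apply Summable.of_norm
      apply Summable.of_nonneg_of_le (fun n => norm_nonneg _) (fun n => ?_)
        (((summable_pow_mul_geometric_of_norm_lt_one 1 (r := |y|)
            (by rwa [Real.norm_eq_abs, abs_abs])).mul_left 2).add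
          (summable_geometric_of_lt_one (abs_nonneg y) hy1))
      simp only [pow_one, Real.norm_eq_abs, abs_mul, abs_pow, abs_abs,
        abs_of_pos (c_pos n), abs_of_pos (show (0:ℝ) < 2*(n:ℝ)+1 by positivity)]
      have h1 : (0:ℝ) ≤ |y|^n := by positivity
      have h2 : (0:ℝ) ≤ (n:ℝ) := Nat.cast_nonneg n
      nlinarith [c_le_one n, c_pos n, mul_nonneg h1 (sub_nonneg.mpr (c_le_one n)),
        mul_nonneg h2 (mul_nonneg h1 (sub_nonneg.mpr (c_le_one n)))]
    set B : ℕ → ℝ := fun n => if n = 0 then 0 else (2*((n:ℝ)-1)+1) * c (n-1) * y^n with hBdef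
    have hBsucc : ∀ n : ℕ, B (n+1) = (2*(n:ℝ)+1) * c n * y^(n+1) := by
      intro n
      simp only [hBdef, if_neg (Nat.succ_ne_zero n), Nat.add_sub_cancel]
      push_cast; ring
    have hSB : Summable B := by
      rw [← summable_nat_add_iff 1]
      apply ((hSA.mul_left y).congr (fun n => ?_)).congr (fun n => (hBsucc n).symm)
      ring
    have hshift : ∑' n, c n * ((n:ℝ) * y^(n-1)) = ∑' n, c (n+1) * (((n:ℝ)+1) * y^n) := by
      rw [hDsum.tsum_eq_zero_add]
      push_cast
      simp
    have h2D : 2 * ∑' n, c n * ((n:ℝ) * y^(n-1)) = ∑' n : ℕ, (2*(n:ℝ)+1) * c n * y^n := by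
      rw [hshift, ← tsum_mul_left]
      apply tsum_congr; intro n
      rw [show (2:ℝ) * (c (n+1) * (((n:ℝ)+1) * y^n)) = ((2*(n:ℝ)+2) * c (n+1)) * y^n by ring,
        c_rec n]
    have hyd : y * ∑' n : ℕ, (2*(n:ℝ)+1) * c n * y^n = ∑' n, B n := by
      rw [hSB.tsum_eq_zero_add]
      have hB0 : B 0 = 0 := by simp [hBdef]
      rw [hB0, zero_add, ← tsum_mul_left]
      exact tsum_congr fun n => by rw [hBsucc n]; ring
    rw [sub_mul, one_mul, h2D, hyd]
    rw [← hSA.tsum_sub hSB]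
    apply tsum_congr
    intro n
    cases n with
    | zero => simp [hBdef, c_zero]
    | succ m =>
        rw [hBsucc m]
        have hr := c_rec m
        push_cast
        linear_combination y^(m+1) * hr
  have hH : ∀ y ∈ t, HasDerivAt (fun z => (F z)^2 * (1-z)) 0 y := by
    intro y hy
    have hFd := hFderiv y hy
    have h1 : HasDerivAt (fun z => (F z)^2)
        (2 * F y * ∑' n, c n * ((n:ℝ) * y^(n-1))) y := by
      simpa [mul_comm, mul_assoc] using hFd.fun_pow 2
    have h2 : HasDerivAt (fun z : ℝ => 1 - z) (-1) y := by
      simpa using (hasDerivAt_id y).const_sub 1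
    have h3 := h1.fun_mul h2
    refine h3.congr_deriv ?_
    have hk := key y hy
    linear_combination (F y) * hk
  have hconst : (F x)^2 * (1-x) = (F 0)^2 * (1-0) := by
    have hdiff : DifferentiableOn ℝ (fun z => (F z)^2 * (1-z)) t := fun y hy =>
      ((hH y hy).differentiableAt).differentiableWithinAt
    have hzero : ∀ y ∈ t, fderivWithin ℝ (fun z => (F z)^2 * (1-z)) t y = 0 := by
      intro y hy
      have hfd := ((hH y hy).hasFDerivAt).hasFDerivWithinAt.fderivWithin
        (hto.uniqueDiffWithinAt hy)
      rw [hfd]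
      ext z; simp
    exact Convex.is_const_of_fderivWithin_eq_zero (𝕜 := ℝ) (convex_Ioo (-ρ) ρ)
      hdiff hzero hxt h0t
  have hF0 : F 0 = 1 := by
    have h00 : ∑' n, c n * (0:ℝ)^n = c 0 * 0^0 := by
      refine tsum_eq_single 0 (fun n hn => ?_)
      simp [zero_pow hn]
    simp only [hF]
    rw [h00]; simp [c_zero]
  have hFxsum : Summable (fun n => c n * x^n) :=
    summable_c_mul_pow (by rwa [abs_of_nonneg hx0])
  have hFx1 : 1 ≤ F x := by
    have hle := hFxsum.le_tsum 0 (fun n _ => mul_nonneg (c_pos n).le (pow_nonneg hx0 n))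
    simpa [c_zero] using hle
  have h1x : 0 < 1 - x := by linarith
  have hsq : (F x)^2 * (1-x) = 1 := by rw [hconst, hF0]; norm_num
  have hval : F x = (Real.sqrt (1-x))⁻¹ := by
    have hs : Real.sqrt (1-x) > 0 := Real.sqrt_pos.mpr h1x
    have h2 : (F x * Real.sqrt (1-x))^2 = 1 := by
      rw [mul_pow, Real.sq_sqrt h1x.le]; linarith [hsq]
    have h3 : F x * Real.sqrt (1-x) = 1 := by
      have hmm : F x * Real.sqrt (1-x) * (F x * Real.sqrt (1-x)) = 1 := by
        nlinarith [h2]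
      have hupos : 0 < F x * Real.sqrt (1-x) :=
        mul_pos (lt_of_lt_of_le one_pos hFx1) hs
      rcases mul_self_eq_one_iff.mp hmm with h | h
      · exact h
      · exfalso; rw [h] at hupos; linarith
    have h4 := eq_div_of_mul_eq hs.ne' h3
    rw [h4, one_div]
  have hfin := hFxsum.hasSum
  rwa [show ∑' n, c n * x^n = F x from rfl, hval] at hfin


lemma wallis_even (n : ℕ) : ∫ θ in Ioo 0 (π/2), (Real.cos θ)^(2*n) = (π/2) * c n := by
  have hcont : ∀ d : ℝ, Continuous fun θ : ℝ => (Real.cos (d - θ))^(2*n) := by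
    intro d; fun_prop
  have h1 : ∫ θ in (0:ℝ)..(π/2), (Real.sin θ)^(2*n)
      = ∫ θ in (0:ℝ)..(π/2), (Real.cos θ)^(2*n) := by
    have := intervalIntegral.integral_comp_sub_left (a := 0) (b := π/2)
      (fun θ => (Real.sin θ)^(2*n)) (π/2)
    simp only [sub_zero, sub_self] at this
    rw [← this]
    congr 1; ext θ; rw [Real.sin_pi_div_two_sub]
  have h2 : ∫ θ in (π/2)..π, (Real.sin θ)^(2*n)
      = ∫ θ in (0:ℝ)..(π/2), (Real.sin θ)^(2*n) := by
    have := intervalIntegral.integral_comp_sub_left (a := 0) (b := π/2)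
      (fun θ => (Real.sin θ)^(2*n)) π
    simp only [sub_zero, sub_self] at this
    rw [show π - π/2 = π/2 by ring] at this
    rw [← this]
    congr 1; ext θ; rw [Real.sin_pi_sub]
  have hsplit : (∫ θ in (0:ℝ)..π, (Real.sin θ)^(2*n))
      = (∫ θ in (0:ℝ)..(π/2), (Real.sin θ)^(2*n)) + ∫ θ in (π/2)..π, (Real.sin θ)^(2*n) := by
    rw [intervalIntegral.integral_add_adjacent_intervals] <;>
      exact (Continuous.intervalIntegrable (by fun_prop) _ _)
  have hval : (∫ θ in (0:ℝ)..π, (Real.sin θ)^(2*n)) = π * c n := by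
    rw [integral_sin_pow_even]; rfl
  have : (∫ θ in (0:ℝ)..(π/2), (Real.cos θ)^(2*n)) = (π/2) * c n := by
    rw [← h1]; nlinarith [hsplit, hval, h2, h1]
  rw [← this, intervalIntegral.integral_of_le (by positivity : (0:ℝ) ≤ π/2),
    integral_Ioc_eq_integral_Ioo]


lemma theta_int {r : ℝ} (hr0 : 0 ≤ r) (hr1 : r < 1) :
    ∫ θ in Ioo 0 (π/2), (Real.sqrt (1 - r^2 * (Real.cos θ)^2))⁻¹
      = (π/2) * ∑' n : ℕ, (c n)^2 * (r^2)^n := by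
  have hr2 : r^2 < 1 := by nlinarith
  have hx : ∀ θ : ℝ, 0 ≤ r^2 * (Real.cos θ)^2 ∧ r^2 * (Real.cos θ)^2 < 1 := by
    intro θ
    constructor
    · positivity
    · nlinarith [Real.cos_sq_le_one θ, sq_nonneg (Real.cos θ), sq_nonneg r]
  set F : ℕ → ℝ → ℝ := fun n θ => c n * (r^2)^n * (Real.cos θ)^(2*n) with hFdef
  have hFcont : ∀ n, Continuous (F n) := by intro n; fun_prop
  have hFint : ∀ n, IntegrableOn (F n) (Ioo 0 (π/2)) := by
    intro n
    exact ((hFcont n).continuousOn.integrableOn_Icc).mono_set Ioo_subset_Icc_self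
  have hμ : volume (Ioo (0:ℝ) (π/2)) = ENNReal.ofReal (π/2) := by
    rw [Real.volume_Ioo, sub_zero]
  have hnormint : ∀ n, (∫ θ in Ioo 0 (π/2), ‖F n θ‖) ≤ (c n * (r^2)^n) * (π/2) := by
    intro n
    have hb : ∀ θ ∈ Ioo (0:ℝ) (π/2), ‖F n θ‖ ≤ c n * (r^2)^n := by
      intro θ _
      rw [Real.norm_eq_abs, hFdef]
      simp only
      rw [abs_mul, abs_mul, abs_of_pos (c_pos n), abs_of_nonneg (by positivity : (0:ℝ) ≤ (r^2)^n)]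
      have h1 : |(Real.cos θ)^(2*n)| ≤ 1 := by
        rw [abs_pow]
        exact pow_le_one₀ (abs_nonneg _) (Real.abs_cos_le_one θ)
      calc c n * (r^2)^n * |(Real.cos θ)^(2*n)| ≤ c n * (r^2)^n * 1 :=
            mul_le_mul_of_nonneg_left h1 (mul_nonneg (c_pos n).le (pow_nonneg (sq_nonneg r) n))
        _ = c n * (r^2)^n := mul_one _
    calc (∫ θ in Ioo 0 (π/2), ‖F n θ‖)
        ≤ ∫ _ in Ioo 0 (π/2), (c n * (r^2)^n) := by
          apply setIntegral_mono_on ((hFint n).norm) (integrableOn_const (by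
            rw [hμ]; exact ENNReal.ofReal_ne_top)) measurableSet_Ioo hb
      _ = (c n * (r^2)^n) * (π/2) := by
          rw [setIntegral_const, Measure.real, hμ, smul_eq_mul, ENNReal.toReal_ofReal (by positivity)]
          ring
  have hsummable : Summable (fun n => ∫ θ in Ioo 0 (π/2), ‖F n θ‖) := by
    apply Summable.of_nonneg_of_le
      (fun n => integral_nonneg (fun θ => norm_nonneg _)) hnormint
    have := (summable_c_mul_pow (x := r^2) (by rwa [abs_of_nonneg (sq_nonneg r)])).mul_right (π/2)
    exact this
  have hswap := MeasureTheory.integral_tsum_of_summable_integral_norm hFint hsummable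
  have hpt : ∀ θ : ℝ, (∑' n, F n θ) = (Real.sqrt (1 - r^2 * (Real.cos θ)^2))⁻¹ := by
    intro θ
    have h := hasSum_c_sqrt (hx θ).1 (hx θ).2
    rw [← h.tsum_eq]
    apply tsum_congr
    intro n
    rw [hFdef]
    simp only
    rw [mul_pow, pow_mul]
    ring
  calc ∫ θ in Ioo 0 (π/2), (Real.sqrt (1 - r^2 * (Real.cos θ)^2))⁻¹
      = ∫ θ in Ioo 0 (π/2), (∑' n, F n θ) := by
        apply setIntegral_congr_fun measurableSet_Ioo
        intro θ _; exact (hpt θ).symm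
    _ = ∑' n, ∫ θ in Ioo 0 (π/2), F n θ := hswap.symm
    _ = (π/2) * ∑' n : ℕ, (c n)^2 * (r^2)^n := by
        rw [← tsum_mul_left]
        apply tsum_congr
        intro n
        rw [hFdef]
        simp only
        rw [integral_const_mul, wallis_even n]
        ring


/-- the integrand of the invariant integral -/
noncomputable def gI (p q t : ℝ) : ℝ := (Real.sqrt ((t^2+p^2)*(t^2+q^2)))⁻¹

/-- the invariant integral -/
noncomputable def Jint (p q : ℝ) : ℝ := ∫ t : ℝ, gI p q t

lemma gI_pos {p q : ℝ} (hp : 0 < p) (hq : 0 < q) (t : ℝ) : 0 < gI p q t := by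
  rw [gI]
  have : 0 < (t^2+p^2)*(t^2+q^2) := by positivity
  positivity

lemma gI_cont {p q : ℝ} (hp : 0 < p) (hq : 0 < q) : Continuous (gI p q) := by
  apply Continuous.inv₀
  · fun_prop
  · intro t
    have : 0 < (t^2+p^2)*(t^2+q^2) := by positivity
    positivity

lemma sqrt_prod_ge {p q t : ℝ} (hq : 0 < q) (hpq : q ≤ p) :
    t^2 + q^2 ≤ Real.sqrt ((t^2+p^2)*(t^2+q^2)) := by
  have h1 : (t^2+q^2)^2 ≤ (t^2+p^2)*(t^2+q^2) := by
    nlinarith [mul_nonneg (mul_nonneg (sub_nonneg.mpr hpq) (by linarith : (0:ℝ) ≤ p + q))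
      (by positivity : (0:ℝ) ≤ t^2 + q^2)]
  calc t^2+q^2 = Real.sqrt ((t^2+q^2)^2) := (Real.sqrt_sq (by positivity)).symm
    _ ≤ _ := Real.sqrt_le_sqrt h1

lemma sqrt_prod_le {p q t : ℝ} (hq : 0 < q) (hpq : q ≤ p) :
    Real.sqrt ((t^2+p^2)*(t^2+q^2)) ≤ t^2 + p^2 := by
  have h1 : (t^2+p^2)*(t^2+q^2) ≤ (t^2+p^2)^2 := by
    nlinarith [mul_nonneg (mul_nonneg (sub_nonneg.mpr hpq) (by linarith : (0:ℝ) ≤ p + q))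
      (by positivity : (0:ℝ) ≤ t^2 + p^2)]
  calc Real.sqrt ((t^2+p^2)*(t^2+q^2)) ≤ Real.sqrt ((t^2+p^2)^2) := Real.sqrt_le_sqrt h1
    _ = t^2+p^2 := Real.sqrt_sq (by positivity)

lemma integrable_inv_sq_add_sq {m : ℝ} (hm : 0 < m) :
    Integrable (fun t : ℝ => (t^2+m^2)⁻¹) := by
  have h : Integrable (fun t : ℝ => m⁻¹^2 * (1 + (m⁻¹*t)^2)⁻¹) := by
    have h2 : Integrable (fun t : ℝ => (1 + (m⁻¹*t)^2)⁻¹) := by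
      have h3 := integrable_inv_one_add_sq.comp_mul_left' (R := m⁻¹) (by positivity)
      simpa using h3
    exact h2.const_mul _
  apply h.congr
  refine ae_of_all _ (fun t => ?_)
  field_simp
  ring

lemma integral_inv_sq_add_sq {m : ℝ} (hm : 0 < m) :
    ∫ t : ℝ, (t^2+m^2)⁻¹ = π / m := by
  have h1 : ∀ t : ℝ, (t^2+m^2)⁻¹ = m⁻¹^2 * (1 + (m⁻¹*t)^2)⁻¹ := by
    intro t; field_simp; ring
  rw [show (fun t : ℝ => (t^2+m^2)⁻¹) = fun t : ℝ => m⁻¹^2 * (1 + (m⁻¹*t)^2)⁻¹ from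
    funext h1]
  rw [MeasureTheory.integral_const_mul]
  rw [MeasureTheory.Measure.integral_comp_mul_left (fun y => (1+y^2)⁻¹) m⁻¹]
  rw [integral_univ_inv_one_add_sq]
  rw [smul_eq_mul, inv_inv, abs_of_pos hm]
  field_simp

lemma integrable_gI {p q : ℝ} (hp : 0 < p) (hq : 0 < q) : Integrable (gI p q) := by
  set m := min p q with hm
  have hm0 : 0 < m := lt_min hp hq
  apply Integrable.mono (integrable_inv_sq_add_sq hm0) ((gI_cont hp hq).aestronglyMeasurable)
  refine ae_of_all _ (fun t => ?_)
  rw [Real.norm_eq_abs, Real.norm_eq_abs, abs_of_pos (gI_pos hp hq t),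
    abs_of_pos (by positivity)]
  rw [gI]
  rw [inv_le_inv₀ (by positivity) (by positivity)]
  calc t^2 + m^2 ≤ Real.sqrt ((t^2+m^2)*(t^2+m^2)) := by
        rw [Real.sqrt_mul_self (by positivity)]
    _ ≤ Real.sqrt ((t^2+p^2)*(t^2+q^2)) := by
        apply Real.sqrt_le_sqrt
        have h1 : m ≤ p := min_le_left _ _
        have h2 : m ≤ q := min_le_right _ _
        have hA : t^2+m^2 ≤ t^2+p^2 := by nlinarith
        have hB : t^2+m^2 ≤ t^2+q^2 := by nlinarith
        exact mul_le_mul hA hB (by positivity) (by positivity)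

lemma Jint_le {p q : ℝ} (hq : 0 < q) (hpq : q ≤ p) : Jint p q ≤ π / q := by
  have hp : 0 < p := lt_of_lt_of_le hq hpq
  rw [Jint, ← integral_inv_sq_add_sq hq]
  apply integral_mono (integrable_gI hp hq) (integrable_inv_sq_add_sq hq)
  intro t
  dsimp only
  rw [gI]
  exact inv_anti₀ (by positivity) (sqrt_prod_ge hq hpq)

lemma Jint_ge {p q : ℝ} (hq : 0 < q) (hpq : q ≤ p) : π / p ≤ Jint p q := by
  have hp : 0 < p := lt_of_lt_of_le hq hpq
  rw [Jint, ← integral_inv_sq_add_sq hp]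
  apply integral_mono (integrable_inv_sq_add_sq hp) (integrable_gI hp hq)
  intro t
  dsimp only
  rw [gI]
  exact inv_anti₀ (lt_of_lt_of_le (by positivity) (sqrt_prod_ge hq hpq))
    (sqrt_prod_le hq hpq)

lemma Jint_pos {p q : ℝ} (hq : 0 < q) (hpq : q ≤ p) : 0 < Jint p q :=
  lt_of_lt_of_le (div_pos Real.pi_pos (lt_of_lt_of_le hq hpq)) (Jint_ge hq hpq)

/-- evenness: integral over ℝ is twice integral over `Ioi 0` -/
lemma Jint_eq_two_Ioi {p q : ℝ} (hp : 0 < p) (hq : 0 < q) :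
    Jint p q = 2 * ∫ t in Ioi (0:ℝ), gI p q t := by
  rw [Jint, ← integral_comp_abs (f := gI p q)]
  congr 1
  ext t
  rw [gI, gI, sq_abs]


lemma Jint_invariance {p q : ℝ} (hp : 0 < p) (hq : 0 < q) :
    Jint ((p+q)/2) (Real.sqrt (p*q)) = Jint p q := by
  have hpq : 0 < p*q := mul_pos hp hq
  set f : ℝ → ℝ := fun t => (t - p*q/t)/2 with hfdef
  set f' : ℝ → ℝ := fun t => (1 + p*q/t^2)/2 with hf'def
  have hderiv : ∀ t ∈ Ioi (0:ℝ), HasDerivWithinAt f (f' t) (Ioi 0) t := by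
    intro t ht
    have ht0 : t ≠ 0 := ne_of_gt ht
    have h1 : HasDerivAt (fun t : ℝ => (t - p*q/t)/2) ((1 - p*q * (-(t^2)⁻¹))/2) t := by
      exact (((hasDerivAt_id t).sub ((hasDerivAt_inv ht0).const_mul (p*q))).div_const 2)
    have h2 : (1 - p*q * (-(t^2)⁻¹))/2 = f' t := by
      rw [hf'def]; field_simp; ring
    rw [h2] at h1
    exact h1.hasDerivWithinAt
  have hmono : StrictMonoOn f (Ioi 0) := by
    intro x hx y hy hlt
    have hx0 : (0:ℝ) < x := hx
    have hy0 : (0:ℝ) < y := hy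
    rw [hfdef]
    simp only
    have h1 : p*q/y ≤ p*q/x := div_le_div_of_nonneg_left hpq.le hx0 hlt.le
    linarith
  have hinj : InjOn f (Ioi 0) := hmono.injOn
  have himg : f '' (Ioi 0) = univ := by
    apply eq_univ_of_forall
    intro u
    set s := Real.sqrt (u^2 + p*q) with hsdef
    have hs2 : s^2 = u^2 + p*q := Real.sq_sqrt (by positivity)
    have hsu : |u| < s := by
      rw [hsdef]
      rw [show |u| = Real.sqrt (u^2) by rw [Real.sqrt_sq_eq_abs]]
      exact Real.sqrt_lt_sqrt (sq_nonneg u) (by linarith)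
    have htpos : 0 < u + s := by
      have := neg_abs_le u
      linarith
    refine ⟨u + s, htpos, ?_⟩
    have ht0 : u + s ≠ 0 := ne_of_gt htpos
    rw [hfdef]
    simp only
    have hdiv : p*q/(u+s) = s - u := by
      rw [div_eq_iff ht0]
      linarith [hs2]
    rw [hdiv]
    ring
  -- pointwise identity
  have hpt : ∀ t ∈ Ioi (0:ℝ),
      |f' t| • gI ((p+q)/2) (Real.sqrt (p*q)) (f t) = 2 * gI p q t := by
    intro t ht
    have ht0 : (0:ℝ) < t := ht
    have hSpos : 0 < Real.sqrt ((t^2+p^2)*(t^2+q^2)) := Real.sqrt_pos.mpr (by positivity)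
    have hkey : ((f t)^2 + ((p+q)/2)^2) * ((f t)^2 + (Real.sqrt (p*q))^2)
        = ((t^2+p*q)/(4*t^2))^2 * ((t^2+p^2)*(t^2+q^2)) := by
      rw [Real.sq_sqrt hpq.le, hfdef]
      field_simp
      ring
    have hsqrt : Real.sqrt (((f t)^2 + ((p+q)/2)^2) * ((f t)^2 + (Real.sqrt (p*q))^2))
        = (t^2+p*q)/(4*t^2) * Real.sqrt ((t^2+p^2)*(t^2+q^2)) := by
      rw [hkey, Real.sqrt_mul (sq_nonneg _), Real.sqrt_sq_eq_abs, abs_of_pos (by positivity)]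
    have hf'val : |f' t| = (t^2+p*q)/(2*t^2) := by
      rw [hf'def]
      simp only
      rw [abs_of_pos (by positivity), div_eq_div_iff (by norm_num : (2:ℝ) ≠ 0) (by positivity : (2*t^2 : ℝ) ≠ 0)]
      field_simp
    rw [smul_eq_mul, gI, gI, hsqrt, hf'val, mul_inv]
    set S := Real.sqrt ((t^2+p^2)*(t^2+q^2)) with hSdef
    rw [inv_div]
    field_simp
    ring
  -- assemble
  have himage := MeasureTheory.integral_image_eq_integral_abs_deriv_smul measurableSet_Ioi
    hderiv hinj (gI ((p+q)/2) (Real.sqrt (p*q)))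
  rw [himg] at himage
  have hA : 0 < (p+q)/2 := by positivity
  have hB : 0 < Real.sqrt (p*q) := Real.sqrt_pos.mpr hpq
  calc Jint ((p+q)/2) (Real.sqrt (p*q))
      = ∫ t : ℝ, gI ((p+q)/2) (Real.sqrt (p*q)) t := rfl
    _ = ∫ t in (univ : Set ℝ), gI ((p+q)/2) (Real.sqrt (p*q)) t := by
        rw [setIntegral_univ]
    _ = ∫ t in Ioi (0:ℝ), |f' t| • gI ((p+q)/2) (Real.sqrt (p*q)) (f t) := himage
    _ = ∫ t in Ioi (0:ℝ), 2 * gI p q t := by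
        apply setIntegral_congr_fun measurableSet_Ioi
        intro t ht
        exact hpt t ht
    _ = 2 * ∫ t in Ioi (0:ℝ), gI p q t := by rw [integral_const_mul]
    _ = Jint p q := (Jint_eq_two_Ioi hp hq).symm


lemma Jint_one {r : ℝ} (hr0 : 0 ≤ r) (hr1 : r < 1) :
    Jint 1 (Real.sqrt (1 - r^2)) =
      2 * ∫ θ in Ioo 0 (π/2), (Real.sqrt (1 - r^2*(Real.cos θ)^2))⁻¹ := by
  have h1r : 0 < 1 - r^2 := by nlinarith
  have hb : 0 < Real.sqrt (1 - r^2) := Real.sqrt_pos.mpr h1r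
  rw [Jint_eq_two_Ioi one_pos hb]
  congr 1
  -- tan image substitution
  have hsub : Ioo (0:ℝ) (π/2) ⊆ Ioo (-(π/2)) (π/2) := by
    intro θ hθ
    exact ⟨by nlinarith [hθ.1, Real.pi_pos], hθ.2⟩
  have hcos : ∀ θ ∈ Ioo (0:ℝ) (π/2), 0 < Real.cos θ := by
    intro θ hθ
    apply Real.cos_pos_of_mem_Ioo
    exact hsub hθ
  have hderiv : ∀ θ ∈ Ioo (0:ℝ) (π/2),
      HasDerivWithinAt Real.tan (1/(Real.cos θ)^2) (Ioo 0 (π/2)) θ :=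
    fun θ hθ => (Real.hasDerivAt_tan (ne_of_gt (hcos θ hθ))).hasDerivWithinAt
  have hinj : InjOn Real.tan (Ioo (0:ℝ) (π/2)) := Real.injOn_tan.mono hsub
  have himg : Real.tan '' (Ioo (0:ℝ) (π/2)) = Ioi 0 := by
    apply Subset.antisymm
    · rintro - ⟨θ, hθ, rfl⟩
      exact Real.tan_pos_of_pos_of_lt_pi_div_two hθ.1 hθ.2
    · intro u hu
      have hap : 0 < Real.arctan u := by
        have h0 : Real.arctan 0 < Real.arctan u := by
          exact Real.arctan_strictMono hu
        simpa using h0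
      exact ⟨Real.arctan u, ⟨hap, Real.arctan_lt_pi_div_two u⟩, Real.tan_arctan u⟩
  have himage := MeasureTheory.integral_image_eq_integral_abs_deriv_smul measurableSet_Ioo
    hderiv hinj (gI 1 (Real.sqrt (1 - r^2)))
  rw [himg] at himage
  rw [himage]
  apply setIntegral_congr_fun measurableSet_Ioo
  intro θ hθ
  have hc := hcos θ hθ
  have hc0 : Real.cos θ ≠ 0 := ne_of_gt hc
  have htan : Real.tan θ = Real.sin θ / Real.cos θ := Real.tan_eq_sin_div_cos θ
  have hsc : (Real.sin θ)^2 = 1 - (Real.cos θ)^2 := by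
    nlinarith [Real.sin_sq_add_cos_sq θ]
  have hrc : 0 < 1 - r^2*(Real.cos θ)^2 := by
    nlinarith [Real.cos_sq_le_one θ, sq_nonneg (Real.cos θ), sq_nonneg r, sq_nonneg (r*Real.cos θ)]
  have hkey : ((Real.tan θ)^2 + 1^2) * ((Real.tan θ)^2 + (Real.sqrt (1-r^2))^2)
      = (1/(Real.cos θ)^2)^2 * (1 - r^2*(Real.cos θ)^2) := by
    rw [Real.sq_sqrt h1r.le, htan]
    field_simp
    nlinarith [hsc]
  have hsqrt : Real.sqrt (((Real.tan θ)^2 + 1^2) * ((Real.tan θ)^2 + (Real.sqrt (1-r^2))^2))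
      = 1/(Real.cos θ)^2 * Real.sqrt (1 - r^2*(Real.cos θ)^2) := by
    rw [hkey, Real.sqrt_mul (sq_nonneg _), Real.sqrt_sq_eq_abs, abs_of_pos (by positivity)]
  dsimp only
  rw [smul_eq_mul, gI, hsqrt, mul_inv]
  rw [abs_of_pos (by positivity : (0:ℝ) < 1/(Real.cos θ)^2)]
  set S := Real.sqrt (1 - r^2*(Real.cos θ)^2) with hSdef
  have hS : 0 < S := Real.sqrt_pos.mpr hrc
  rw [one_div, inv_inv]
  field_simp


lemma poch_one (n : ℕ) : poch 1 n = (n.factorial : ℝ) := by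
  induction n with
  | zero => simp [poch]
  | succ m ih =>
      rw [poch, Finset.prod_range_succ, ← poch, ih, Nat.factorial_succ]
      push_cast
      ring

lemma poch_half (n : ℕ) : poch (1/2) n = c n * (n.factorial : ℝ) := by
  induction n with
  | zero => simp [poch, c_zero]
  | succ m ih =>
      rw [poch, Finset.prod_range_succ, ← poch, ih, c_succ, Nat.factorial_succ]
      push_cast
      field_simp
      ring

lemma hypF_eq (r : ℝ) : hypF (1/2) (1/2) 1 (r^2) = ∑' n : ℕ, (c n)^2 * (r^2)^n := by
  rw [hypF]
  apply tsum_congr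
  intro n
  rw [poch_one, poch_half]
  have hf : (n.factorial : ℝ) ≠ 0 := Nat.cast_ne_zero.mpr n.factorial_ne_zero
  field_simp

theorem agm_main (r : ℝ) (hr : r ∈ Set.Ioo (0:ℝ) 1) (a b : ℕ → ℝ)
    (ha0 : a 0 = 1) (hb0 : b 0 = Real.sqrt (1 - r^2))
    (ha : ∀ n, a (n+1) = (a n + b n) / 2)
    (hb : ∀ n, b (n+1) = Real.sqrt (a n * b n))
    (L : ℝ)
    (hLa : Filter.Tendsto a Filter.atTop (nhds L))
    (hLb : Filter.Tendsto b Filter.atTop (nhds L)) :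
    L = Real.pi / (2 * ellK r) := by
  obtain ⟨hr0, hr1⟩ := hr
  have h1r : 0 < 1 - r^2 := by nlinarith
  have hb0pos : 0 < b 0 := by rw [hb0]; exact Real.sqrt_pos.mpr h1r
  have hb0le : b 0 ≤ a 0 := by
    rw [hb0, ha0]
    calc Real.sqrt (1 - r^2) ≤ Real.sqrt 1 := Real.sqrt_le_sqrt (by nlinarith)
      _ = 1 := Real.sqrt_one
  have hpos : ∀ n, 0 < b n ∧ b n ≤ a n := by
    intro n
    induction n with
    | zero => exact ⟨hb0pos, hb0le⟩
    | succ m ih =>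
        obtain ⟨h1, h2⟩ := ih
        have hapos : 0 < a m := lt_of_lt_of_le h1 h2
        constructor
        · rw [hb]
          exact Real.sqrt_pos.mpr (mul_pos hapos h1)
        · rw [hb, ha]
          have hsq : a m * b m ≤ ((a m + b m)/2)^2 := by nlinarith [sq_nonneg (a m - b m)]
          calc Real.sqrt (a m * b m) ≤ Real.sqrt (((a m + b m)/2)^2) := Real.sqrt_le_sqrt hsq
            _ = (a m + b m)/2 := Real.sqrt_sq (by positivity)
  have hbmono : Monotone b := by
    apply monotone_nat_of_le_succ
    intro n
    obtain ⟨h1, h2⟩ := hpos n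
    rw [hb]
    calc b n = Real.sqrt (b n * b n) := by rw [Real.sqrt_mul_self h1.le]
      _ ≤ Real.sqrt (a n * b n) := Real.sqrt_le_sqrt (by nlinarith)
  have hJ : ∀ n, Jint (a n) (b n) = Jint (a 0) (b 0) := by
    intro n
    induction n with
    | zero => rfl
    | succ m ih =>
        obtain ⟨h1, h2⟩ := hpos m
        have hapos : 0 < a m := lt_of_lt_of_le h1 h2
        rw [ha, hb, Jint_invariance hapos h1, ih]
  have hbL : ∀ n, b n ≤ L := fun n =>
    ge_of_tendsto hLb (Filter.eventually_atTop.mpr ⟨n, fun m hm => hbmono hm⟩)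
  have hLpos : 0 < L := lt_of_lt_of_le hb0pos (hbL 0)
  set J0 := Jint (a 0) (b 0) with hJ0
  have hub : ∀ n, J0 ≤ π / b n := by
    intro n
    rw [← hJ n]
    exact Jint_le (hpos n).1 (hpos n).2
  have hlb : ∀ n, π / a n ≤ J0 := by
    intro n
    rw [← hJ n]
    exact Jint_ge (hpos n).1 (hpos n).2
  have htend1 : Filter.Tendsto (fun n => π / a n) Filter.atTop (nhds (π / L)) :=
    Filter.Tendsto.div tendsto_const_nhds hLa (ne_of_gt hLpos)
  have htend2 : Filter.Tendsto (fun n => π / b n) Filter.atTop (nhds (π / L)) :=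
    Filter.Tendsto.div tendsto_const_nhds hLb (ne_of_gt hLpos)
  have hge : π / L ≤ J0 := le_of_tendsto htend1 (Filter.Eventually.of_forall hlb)
  have hle : J0 ≤ π / L := ge_of_tendsto htend2 (Filter.Eventually.of_forall hub)
  have hJ0val : J0 = π / L := le_antisymm hle hge
  have hJ0K : J0 = 2 * ellK r := by
    rw [hJ0, ha0, hb0, Jint_one hr0.le hr1, theta_int hr0.le hr1, ellK, hypF_eq]
  have hKpos : 0 < ellK r := by
    have : 0 < J0 := by
      rw [hJ0val]; positivity
    linarith [hJ0K]
  rw [hJ0K] at hJ0val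
  field_simp at hJ0val ⊢
  linarith [hJ0val]


end AGMX

theorem agm_limit_eq_pi_div_two_K (r : ℝ) (hr : r ∈ Set.Ioo (0:ℝ) 1) (a b : ℕ → ℝ)
    (ha0 : a 0 = 1) (hb0 : b 0 = Real.sqrt (1 - r^2))
    (ha : ∀ n, a (n+1) = (a n + b n) / 2)
    (hb : ∀ n, b (n+1) = Real.sqrt (a n * b n))
    (L : ℝ)
    (hLa : Filter.Tendsto a Filter.atTop (nhds L))
    (hLb : Filter.Tendsto b Filter.atTop (nhds L)) :
    L = Real.pi / (2 * ellK r) := by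
  exact AGMX.agm_main r hr a b ha0 hb0 ha hb L hLa hLb
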